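/- Suppose v : ℤ → ℝ satisfies v_i ≥ a|iΔx| + b for all i with a > 0, and that the scheme (with CFL condition 2εΔt/Δx² + 4L Δt/Δx ≤ 1 and v discrete L-Lipschitz with L ≥ a) produces u_i = M(v)_i − Δt·R_i where R_i ≤ K for all i. Then u_i ≥ a|iΔx| + b − Δt·a² − Δt·K for all i ≠ 0, and u₀ ≥ b − Δt·K. -/

import Mathlib

noncomputable def Hnum (p q : ℝ) : ℝ := max ((max p 0) ^ 2) ((min q 0) ^ 2)

noncomputable def Mop (ε Δt Δx : ℝ) (u : ℤ → ℝ) (i : ℤ) : ℝ :=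
  u i + ε * Δt * (u (i + 1) - 2 * u i + u (i - 1)) / Δx ^ 2
    - Δt * Hnum ((u i - u (i - 1)) / Δx) ((u (i + 1) - u i) / Δx)

noncomputable def gop (ε Δt Δx x y z : ℝ) : ℝ :=
  y + ε * Δt * (z - 2 * y + x) / Δx ^ 2
    - Δt * Hnum ((y - x) / Δx) ((z - y) / Δx)

lemma Mop_eq_gop (ε Δt Δx : ℝ) (u : ℤ → ℝ) (i : ℤ) :
    Mop ε Δt Δx u i = gop ε Δt Δx (u (i - 1)) (u i) (u (i + 1)) := rfl

lemma Hnum_mono_left {p p' : ℝ} (h : p ≤ p') (q : ℝ) : Hnum p q ≤ Hnum p' q := by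
  unfold Hnum
  apply max_le_max _ le_rfl
  have h1 : max p 0 ≤ max p' 0 := max_le_max h le_rfl
  nlinarith [le_max_right p (0:ℝ), le_max_right p' (0:ℝ)]

lemma Hnum_anti_right (p : ℝ) {q q' : ℝ} (h : q ≤ q') : Hnum p q' ≤ Hnum p q := by
  unfold Hnum
  apply max_le_max le_rfl
  have h1 : min q 0 ≤ min q' 0 := min_le_min h le_rfl
  nlinarith [min_le_right q (0:ℝ), min_le_right q' (0:ℝ)]

lemma Hnum_shift {L p q h : ℝ} (hL : 0 ≤ L) (hh : 0 ≤ h)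
    (hp : p + h ≤ L) (hq : -L ≤ q - h) :
    Hnum (p + h) (q - h) ≤ Hnum p q + 2 * L * h := by
  have hA : (max (p + h) 0) ^ 2 ≤ (max p 0) ^ 2 + 2 * L * h := by
    have h1 : max (p + h) 0 ≤ max p 0 + h :=
      max_le (by linarith [le_max_left p (0:ℝ)]) (by linarith [le_max_right p (0:ℝ)])
    have h2 : max p 0 ≤ max (p + h) 0 := max_le_max (by linarith) le_rfl
    have h3 : max (p + h) 0 ≤ L := max_le hp hL
    have h0 : (0:ℝ) ≤ max p 0 := le_max_right _ _
    nlinarith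
  have hB : (min (q - h) 0) ^ 2 ≤ (min q 0) ^ 2 + 2 * L * h := by
    have h1 : min q 0 - h ≤ min (q - h) 0 :=
      le_min (by linarith [min_le_left q (0:ℝ)]) (by linarith [min_le_right q (0:ℝ)])
    have h2 : min (q - h) 0 ≤ min q 0 := min_le_min (by linarith) le_rfl
    have h3 : -L ≤ min (q - h) 0 := le_min hq (by linarith)
    have h0 : min q 0 ≤ 0 := min_le_right _ _
    nlinarith
  unfold Hnum
  apply max_le
  · exact le_trans hA (add_le_add (le_max_left _ _) le_rfl)
  · exact le_trans hB (add_le_add (le_max_right _ _) le_rfl)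

lemma gop_left {ε Δt Δx x x' y z : ℝ} (hε : 0 ≤ ε) (hΔt : 0 ≤ Δt) (hΔx : 0 < Δx)
    (hx : x ≤ x') : gop ε Δt Δx x y z ≤ gop ε Δt Δx x' y z := by
  unfold gop
  have h2 : (0:ℝ) < Δx ^ 2 := by positivity
  have hH : Hnum ((y - x') / Δx) ((z - y) / Δx) ≤ Hnum ((y - x) / Δx) ((z - y) / Δx) :=
    Hnum_mono_left ((div_le_div_iff_of_pos_right hΔx).mpr (by linarith)) _
  have hE : ε * Δt * (z - 2 * y + x) / Δx ^ 2 ≤ ε * Δt * (z - 2 * y + x') / Δx ^ 2 := by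
    apply (div_le_div_iff_of_pos_right h2).mpr
    nlinarith [mul_le_mul_of_nonneg_left hx (mul_nonneg hε hΔt)]
  nlinarith [mul_le_mul_of_nonneg_left hH hΔt]

lemma gop_right {ε Δt Δx x y z z' : ℝ} (hε : 0 ≤ ε) (hΔt : 0 ≤ Δt) (hΔx : 0 < Δx)
    (hz : z ≤ z') : gop ε Δt Δx x y z ≤ gop ε Δt Δx x y z' := by
  unfold gop
  have h2 : (0:ℝ) < Δx ^ 2 := by positivity
  have hH : Hnum ((y - x) / Δx) ((z' - y) / Δx) ≤ Hnum ((y - x) / Δx) ((z - y) / Δx) :=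
    Hnum_anti_right _ ((div_le_div_iff_of_pos_right hΔx).mpr (by linarith))
  have hE : ε * Δt * (z - 2 * y + x) / Δx ^ 2 ≤ ε * Δt * (z' - 2 * y + x) / Δx ^ 2 := by
    apply (div_le_div_iff_of_pos_right h2).mpr
    nlinarith [mul_le_mul_of_nonneg_left hz (mul_nonneg hε hΔt)]
  nlinarith [mul_le_mul_of_nonneg_left hH hΔt]

lemma gop_mid {ε Δt Δx L x y y' z : ℝ} (hε : 0 ≤ ε) (hΔt : 0 ≤ Δt) (hΔx : 0 < Δx)
    (hL : 0 ≤ L) (hCFL : 2 * ε * Δt / Δx ^ 2 + 4 * L * Δt / Δx ≤ 1)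
    (hy : y ≤ y') (hp : (y' - x) / Δx ≤ L) (hq : -L ≤ (z - y') / Δx) :
    gop ε Δt Δx x y z ≤ gop ε Δt Δx x y' z := by
  have hΔx' : Δx ≠ 0 := ne_of_gt hΔx
  set h : ℝ := (y' - y) / Δx with hhdef
  have hh : 0 ≤ h := div_nonneg (by linarith) hΔx.le
  have e1 : (y' - x) / Δx = (y - x) / Δx + h := by
    rw [hhdef, ← add_div]; ring_nf
  have e2 : (z - y') / Δx = (z - y) / Δx - h := by
    rw [hhdef, div_sub_div_same]; ring_nf
  have key : Hnum ((y' - x) / Δx) ((z - y') / Δx)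
      ≤ Hnum ((y - x) / Δx) ((z - y) / Δx) + 2 * L * h := by
    rw [e1, e2]
    exact Hnum_shift hL hh (by rw [← e1]; exact hp) (by rw [← e2]; exact hq)
  have key' : Δt * Hnum ((y' - x) / Δx) ((z - y') / Δx)
      ≤ Δt * Hnum ((y - x) / Δx) ((z - y) / Δx) + Δt * (2 * L * h) := by
    nlinarith [mul_le_mul_of_nonneg_left key hΔt]
  have hcfl' : 2 * ε * Δt / Δx ^ 2 + 2 * L * Δt / Δx ≤ 1 := by
    have h4 : 4 * L * Δt / Δx = 2 * L * Δt / Δx + 2 * L * Δt / Δx := by ring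
    have h5 : 0 ≤ 2 * L * Δt / Δx := by positivity
    linarith
  have hmul : (2 * ε * Δt / Δx ^ 2 + 2 * L * Δt / Δx) * (y' - y) ≤ 1 * (y' - y) :=
    mul_le_mul_of_nonneg_right hcfl' (by linarith)
  have hmul2 : 2 * ε * Δt / Δx ^ 2 * (y' - y) + 2 * L * Δt / Δx * (y' - y) ≤ y' - y := by
    linear_combination hmul
  have r1 : ε * Δt * (z - 2 * y + x) / Δx ^ 2 - ε * Δt * (z - 2 * y' + x) / Δx ^ 2
      = 2 * ε * Δt / Δx ^ 2 * (y' - y) := by ring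
  have r2 : Δt * (2 * L * h) = 2 * L * Δt / Δx * (y' - y) := by
    rw [hhdef]; field_simp
  unfold gop
  linarith [key', hmul2, r1, r2]

lemma gop_mono {ε Δt Δx L x y z x' y' z' : ℝ} (hε : 0 ≤ ε) (hΔt : 0 ≤ Δt) (hΔx : 0 < Δx)
    (hL : 0 ≤ L) (hCFL : 2 * ε * Δt / Δx ^ 2 + 4 * L * Δt / Δx ≤ 1)
    (hx : x ≤ x') (hy : y ≤ y') (hz : z ≤ z')
    (hp : (y' - x') / Δx ≤ L) (hq : -L ≤ (z' - y') / Δx) :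
    gop ε Δt Δx x y z ≤ gop ε Δt Δx x' y' z' :=
  calc gop ε Δt Δx x y z ≤ gop ε Δt Δx x' y z := gop_left hε hΔt hΔx hx
    _ ≤ gop ε Δt Δx x' y z' := gop_right hε hΔt hΔx hz
    _ ≤ gop ε Δt Δx x' y' z' := gop_mid hε hΔt hΔx hL hCFL hy hp hq

lemma gop_affine {ε Δt Δx x y z p q : ℝ} (hΔx : Δx ≠ 0)
    (hx : y - x = p * Δx) (hz : z - y = q * Δx) :
    gop ε Δt Δx x y z = y + ε * Δt * (q - p) / Δx - Δt * Hnum p q := by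
  unfold gop
  have h1 : (y - x) / Δx = p := by rw [hx]; field_simp
  have h2 : (z - y) / Δx = q := by rw [hz]; field_simp
  have h3 : z - 2 * y + x = (q - p) * Δx := by
    have : z - 2 * y + x = (z - y) - (y - x) := by ring
    rw [this, hx, hz]; ring
  rw [h1, h2, h3]
  field_simp

lemma Hnum_pp {a : ℝ} (ha : 0 ≤ a) : Hnum a a = a ^ 2 := by
  unfold Hnum
  have h1 : max a 0 = a := max_eq_left ha
  have h2 : min a 0 = 0 := min_eq_right ha
  rw [h1, h2]
  have h3 : ((0:ℝ)) ^ 2 ≤ a ^ 2 := by nlinarith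
  rw [max_eq_left h3]

lemma Hnum_nn {a : ℝ} (ha : 0 ≤ a) : Hnum (-a) (-a) = a ^ 2 := by
  unfold Hnum
  have h1 : max (-a) 0 = 0 := max_eq_right (by linarith)
  have h2 : min (-a) 0 = -a := min_eq_left (by linarith)
  rw [h1, h2]
  have h3 : ((0:ℝ)) ^ 2 ≤ (-a) ^ 2 := by nlinarith
  rw [max_eq_right h3]
  ring

lemma Hnum_np {a : ℝ} (ha : 0 ≤ a) : Hnum (-a) a = 0 := by
  unfold Hnum
  have h1 : max (-a) 0 = 0 := max_eq_right (by linarith)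
  have h2 : min a 0 = 0 := min_eq_right ha
  rw [h1, h2]
  norm_num

noncomputable def Wcone (a b Δx : ℝ) (i : ℤ) : ℝ := a * |(i : ℝ) * Δx| + b

/-- linear-growth lower bounds propagated by one step of the scheme. -/
theorem step_lower_bound (a b ε Δt Δx L K : ℝ) (ha : 0 < a) (hε : 0 ≤ ε)
    (hΔt : 0 < Δt) (hΔx : 0 < Δx) (hLa : a ≤ L)
    (hCFL : 2 * ε * Δt / Δx ^ 2 + 4 * L * Δt / Δx ≤ 1)
    (v : ℤ → ℝ)
    (hvLip : ∀ i : ℤ, |v i - v (i - 1)| ≤ L * Δx)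
    (hv : ∀ i : ℤ, a * |(i : ℝ) * Δx| + b ≤ v i)
    (R : ℤ → ℝ) (hR : ∀ i, R i ≤ K)
    (u : ℤ → ℝ) (hu : ∀ i, u i = Mop ε Δt Δx v i - Δt * R i) :
    (∀ i : ℤ, i ≠ 0 → a * |(i : ℝ) * Δx| + b - Δt * a ^ 2 - Δt * K ≤ u i) ∧
    b - Δt * K ≤ u 0 := by
  have hΔx' : Δx ≠ 0 := ne_of_gt hΔx
  have hL : 0 ≤ L := by linarith
  have hwv : ∀ j : ℤ, Wcone a b Δx j ≤ v j := fun j => hv j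
  have hkey : ∀ i : ℤ, gop ε Δt Δx (Wcone a b Δx (i - 1)) (Wcone a b Δx i)
      (Wcone a b Δx (i + 1)) ≤ Mop ε Δt Δx v i := by
    intro i
    rw [Mop_eq_gop]
    have hp : (v i - v (i - 1)) / Δx ≤ L := by
      rw [div_le_iff₀ hΔx]
      have := abs_le.mp (hvLip i)
      linarith [this.2]
    have hq : -L ≤ (v (i + 1) - v i) / Δx := by
      rw [le_div_iff₀ hΔx]
      have h1 := hvLip (i + 1)
      have e : i + 1 - 1 = i := by ring
      rw [e] at h1
      have := abs_le.mp h1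
      nlinarith [this.1]
    exact gop_mono hε hΔt.le hΔx hL hCFL (hwv (i - 1)) (hwv i) (hwv (i + 1)) hp hq
  constructor
  · intro i hi
    have hRi : Δt * R i ≤ Δt * K := mul_le_mul_of_nonneg_left (hR i) hΔt.le
    have hgw : gop ε Δt Δx (Wcone a b Δx (i - 1)) (Wcone a b Δx i) (Wcone a b Δx (i + 1))
        = Wcone a b Δx i - Δt * a ^ 2 := by
      rcases lt_or_gt_of_ne hi with hneg | hpos
      · have hi1 : (i : ℝ) ≤ -1 := by
          have : i ≤ -1 := by omega
          exact_mod_cast this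
        have c1 : ((i - 1 : ℤ) : ℝ) = (i : ℝ) - 1 := by push_cast; ring
        have c2 : ((i + 1 : ℤ) : ℝ) = (i : ℝ) + 1 := by push_cast; ring
        have a0 : |(i : ℝ) * Δx| = -((i : ℝ) * Δx) := abs_of_nonpos (by nlinarith)
        have a1 : |((i : ℝ) - 1) * Δx| = -(((i : ℝ) - 1) * Δx) := abs_of_nonpos (by nlinarith)
        have a2 : |((i : ℝ) + 1) * Δx| = -(((i : ℝ) + 1) * Δx) := abs_of_nonpos (by nlinarith)
        have hx : Wcone a b Δx i - Wcone a b Δx (i - 1) = (-a) * Δx := by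
          simp only [Wcone, c1, a0, a1]; ring
        have hz : Wcone a b Δx (i + 1) - Wcone a b Δx i = (-a) * Δx := by
          simp only [Wcone, c2, a0, a2]; ring
        rw [gop_affine hΔx' hx hz, Hnum_nn ha.le]; ring
      · have hi1 : (1 : ℝ) ≤ (i : ℝ) := by exact_mod_cast hpos
        have c1 : ((i - 1 : ℤ) : ℝ) = (i : ℝ) - 1 := by push_cast; ring
        have c2 : ((i + 1 : ℤ) : ℝ) = (i : ℝ) + 1 := by push_cast; ring
        have a0 : |(i : ℝ) * Δx| = (i : ℝ) * Δx := abs_of_nonneg (by nlinarith)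
        have a1 : |((i : ℝ) - 1) * Δx| = ((i : ℝ) - 1) * Δx := abs_of_nonneg (by nlinarith)
        have a2 : |((i : ℝ) + 1) * Δx| = ((i : ℝ) + 1) * Δx := abs_of_nonneg (by nlinarith)
        have hx : Wcone a b Δx i - Wcone a b Δx (i - 1) = a * Δx := by
          simp only [Wcone, c1, a0, a1]; ring
        have hz : Wcone a b Δx (i + 1) - Wcone a b Δx i = a * Δx := by
          simp only [Wcone, c2, a0, a2]; ring
        rw [gop_affine hΔx' hx hz, Hnum_pp ha.le]; ring
    have hki := hkey i
    rw [hgw] at hki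
    rw [hu i]
    have : Wcone a b Δx i - Δt * a ^ 2 - Δt * K ≤ Mop ε Δt Δx v i - Δt * R i := by
      linarith
    simpa [Wcone] using this
  · have e0 : |((0:ℤ):ℝ) * Δx| = 0 := by norm_num
    have e1 : |((0 - 1 : ℤ):ℝ) * Δx| = Δx := by
      push_cast
      rw [neg_one_mul, abs_neg, abs_of_nonneg hΔx.le]
    have e2 : |((0 + 1 : ℤ):ℝ) * Δx| = Δx := by
      push_cast
      rw [one_mul, abs_of_nonneg hΔx.le]
    have hx : Wcone a b Δx 0 - Wcone a b Δx (0 - 1) = (-a) * Δx := by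
      simp only [Wcone]
      rw [e0, e1]; ring
    have hz : Wcone a b Δx (0 + 1) - Wcone a b Δx 0 = a * Δx := by
      simp only [Wcone]
      rw [e0, e2]; ring
    have hg : gop ε Δt Δx (Wcone a b Δx (0 - 1)) (Wcone a b Δx 0) (Wcone a b Δx (0 + 1))
        = Wcone a b Δx 0 + ε * Δt * (a - -a) / Δx := by
      rw [gop_affine hΔx' hx hz, Hnum_np ha.le]; ring
    have hkey0 := hkey 0
    rw [hg] at hkey0
    have hpos : 0 ≤ ε * Δt * (a - -a) / Δx := by
      apply div_nonneg _ hΔx.le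
      have := mul_nonneg (mul_nonneg hε hΔt.le) (show (0:ℝ) ≤ a - -a by linarith)
      linarith
    have hw0 : Wcone a b Δx 0 = b := by simp [Wcone]
    rw [hu 0]
    have hR0 : Δt * R 0 ≤ Δt * K := mul_le_mul_of_nonneg_left (hR 0) hΔt.le
    linarith [hkey0, hpos, hw0, hR0]
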